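/- A functor F : Set → Set preserves connected limits if and only if it is (isomorphic to) a polynomial functor, i.e. a coproduct of representable functors. -/

import Mathlib

universe u

open CategoryTheory CategoryTheory.Limits

/-- The endofunctor of `Type u` underlying a polynomial functor. -/
def PFunctor.toFunctor (P : PFunctor.{u}) : Type u ⥤ Type u where
  obj := P.Obj
  map f := TypeCat.ofHom (P.map f)
  map_id := by intro X; refine ConcreteCategory.hom_ext _ _ fun x => ?_; cases x; rfl
  map_comp := by intro X Y Z f g; refine ConcreteCategory.hom_ext _ _ fun x => ?_; cases x; rfl

/-- Eta-style rewriting of a sigma element whose first component is known. -/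
theorem sigma_eq_cast {α : Type u} {B : α → Type u} {X : Type u}
    (x : Σ a, B a → X) (a₀ : α) (h : x.1 = a₀) :
    x = ⟨a₀, fun b => x.2 (cast (congrArg B h.symm) b)⟩ := by
  cases x; subst h; rfl

theorem pfunctor_preserves (P : PFunctor.{u}) (J : Type u) [SmallCategory J]
    [IsConnected J] : PreservesLimitsOfShape J P.toFunctor := by
  constructor
  intro K
  constructor
  intro c hc
  rw [Types.isLimit_iff]
  intro s hs
  -- first components are constant
  obtain ⟨j₀⟩ : Nonempty J := inferInstance
  set a₀ : P.A := (s j₀).1 with ha₀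
  have ha : ∀ j : J, (s j).1 = a₀ := by
    have := @constant_of_preserves_morphisms J _ _ P.A (fun j => (s j).1) ?_
    · intro j; exact this j j₀
    · intro j j' f
      exact congrArg Sigma.fst (hs f)
  -- normalized second components
  set f : ∀ j : J, P.B a₀ → K.obj j :=
    fun j b => (s j).2 (cast (congrArg P.B (ha j).symm) b) with hf
  have e : ∀ j, s j = ⟨a₀, f j⟩ := fun j => sigma_eq_cast (s j) a₀ (ha j)
  have hcompat : ∀ {j j'} (φ : j ⟶ j') (b : P.B a₀), K.map φ (f j b) = f j' b := by
    intro j j' φ b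
    have h1 : (⟨a₀, fun b => K.map φ (f j b)⟩ : P.Obj (K.obj j')) = ⟨a₀, f j'⟩ := by
      have := hs φ
      rw [e j, e j'] at this
      exact this
    exact congrFun (eq_of_heq (Sigma.ext_iff.mp h1).2) b
  -- sections of K for each b
  have hsec : ∀ b : P.B a₀, (fun j => f j b) ∈ K.sections := by
    intro b j j' φ
    exact hcompat φ b
  let eqv := Types.isLimitEquivSections hc
  refine ⟨⟨a₀, fun b => eqv.symm ⟨fun j => f j b, hsec b⟩⟩, ?_, ?_⟩
  · intro j
    rw [e j]
    show (⟨a₀, fun b => c.π.app j (eqv.symm ⟨fun j => f j b, hsec b⟩)⟩ : P.Obj (K.obj j)) = _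
    congr 1
    funext b
    exact congrFun (congrArg Subtype.val (eqv.apply_symm_apply ⟨fun j => f j b, hsec b⟩)) j
  · intro y hy
    have hy1 : y.1 = a₀ := by
      have := congrArg Sigma.fst (hy j₀)
      exact this
    have ey := sigma_eq_cast y a₀ hy1
    set g : P.B a₀ → c.pt := fun b => y.2 (cast (congrArg P.B hy1.symm) b) with hg
    have hyg : ∀ j (b : P.B a₀), c.π.app j (g b) = f j b := by
      intro j b
      have h1 : (⟨a₀, fun b => c.π.app j (g b)⟩ : P.Obj (K.obj j)) = ⟨a₀, f j⟩ := by
        have := hy j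
        rw [ey, e j] at this
        exact this
      exact congrFun (eq_of_heq (Sigma.ext_iff.mp h1).2) b
    rw [ey]
    congr 1
    funext b
    apply eqv.injective
    rw [Equiv.apply_symm_apply]
    apply Subtype.ext
    funext j
    exact hyg j b

section Forward

variable (F : Type u ⥤ Type u)

/-- the fiber of `F` over `i : F.obj PUnit`, as a functor. -/
@[simps]
def fiberFunctor (i : F.obj PUnit) : Type u ⥤ Type u where
  obj X := {y : F.obj X // F.map (TypeCat.ofHom fun _ => PUnit.unit) y = i}
  map {X Y} f := TypeCat.ofHom fun y => ⟨F.map f y.1, by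
    have h := F.map_comp_apply f (TypeCat.ofHom fun _ => PUnit.unit) y.1
    exact h.symm.trans y.2⟩
  map_id X := by
    refine ConcreteCategory.hom_ext _ _ fun y => ?_; apply Subtype.ext; show F.map (𝟙 X) y.1 = y.1
    rw [F.map_id]; rfl
  map_comp {X Y Z} f g := by
    refine ConcreteCategory.hom_ext _ _ fun y => ?_; apply Subtype.ext; show F.map (f ≫ g) y.1 = F.map g (F.map f y.1)
    rw [F.map_comp]; rfl

/-- `WithTerminal J` is connected. -/
instance withTerminal_connected (J : Type u) [SmallCategory J] :
    IsConnected (WithTerminal J) := by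
  apply zigzag_isConnected
  intro x y
  have hx : ∀ z : WithTerminal J, Zigzag z WithTerminal.star := by
    intro z
    exact Relation.ReflTransGen.single (Or.inl ⟨WithTerminal.starTerminal.from z⟩)
  exact (hx x).trans (zigzag_symm.symm _ _ (hx y))

/-- the extension of `K` to `WithTerminal J` sending `star` to `PUnit`. -/
abbrev extDiagram {J : Type u} [SmallCategory J] (K : J ⥤ Type u) :
    WithTerminal J ⥤ Type u :=
  WithTerminal.lift K (fun j => (TypeCat.ofHom fun _ => PUnit.unit : K.obj j ⟶ PUnit))
    (fun _ _ _ => rfl)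

/-- extend a cone over `K` to a cone over `extDiagram K`. -/
def extCone {J : Type u} [SmallCategory J] (K : J ⥤ Type u) (c : Cone K) :
    Cone (extDiagram K) where
  pt := c.pt
  π :=
    { app := fun x => match x with
        | .of j => c.π.app j
        | .star => TypeCat.ofHom fun _ => PUnit.unit
      naturality := by
        rintro (x | _) (y | _) f
        · exact c.π.naturality (WithTerminal.down f)
        · rfl
        · exact (f : PEmpty).elim
        · rfl }

theorem extCone_isLimit {J : Type u} [SmallCategory J] {K : J ⥤ Type u}
    {c : Cone K} (hc : IsLimit c) : Nonempty (IsLimit (extCone K c)) := by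
  rw [Types.isLimit_iff]
  intro t ht
  have htK : (fun j => t (.of j)) ∈ K.sections := by
    intro j j' f
    exact @ht (.of j) (.of j') f
  obtain ⟨x, hx, hxu⟩ := (Types.isLimit_iff c).mp ⟨hc⟩ _ htK
  refine ⟨x, ?_, fun z hz => hxu z (fun j => hz (.of j))⟩
  rintro (j | _)
  · exact hx j
  · exact Subsingleton.elim (α := PUnit.{u+1}) _ _

theorem fiber_preserves
    (hF : ∀ (J : Type u) [SmallCategory J] [IsConnected J],
      Nonempty (PreservesLimitsOfShape J F)) (i : F.obj PUnit) :
    PreservesLimits (fiberFunctor F i) := by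
  constructor
  intro J _
  constructor
  intro K
  constructor
  intro c hc
  rw [Types.isLimit_iff]
  intro s hs
  have hc' : IsLimit (extCone K c) := (extCone_isLimit hc).some
  obtain ⟨pres⟩ := hF (WithTerminal J)
  have hFc' : IsLimit (F.mapCone (extCone K c)) :=
    (PreservesLimit.preserves hc').some
  have key := (Types.isLimit_iff (F.mapCone (extCone K c))).mp ⟨hFc'⟩
  set s' : ∀ x : WithTerminal J, (extDiagram K ⋙ F).obj x := fun x =>
    match x with
    | .of j => (s j).1
    | .star => i
    with hs'def
  have hs' : s' ∈ (extDiagram K ⋙ F).sections := by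
    rintro (x | _) (y | _) f
    · exact congrArg Subtype.val (@hs x y f)
    · exact (s x).2
    · exact (f : PEmpty).elim
    · exact F.map_id_apply _ i
  obtain ⟨x, hx, hxu⟩ := key s' hs'
  have hxi : F.map (TypeCat.ofHom fun _ => PUnit.unit) x = i := hx WithTerminal.star
  refine ⟨⟨x, hxi⟩, ?_, ?_⟩
  · intro j
    exact Subtype.ext (hx (.of j))
  · intro z hz
    apply Subtype.ext
    apply hxu
    rintro (j | _)
    · exact congrArg Subtype.val (hz j)
    · exact z.2

theorem type_isCoseparating :
    ObjectProperty.IsCoseparating (ObjectProperty.singleton (ULift.{u} Prop)) := by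
  intro X Y f g h
  refine ConcreteCategory.hom_ext _ _ fun x => ?_
  by_contra hne
  have h1 := ConcreteCategory.congr_hom (h (ULift Prop) ((ObjectProperty.singleton_iff _ _).2 rfl)
    (TypeCat.ofHom fun y => ⟨y = f x⟩)) x
  have h2 : (f x = f x) = (g x = f x) := congrArg ULift.down h1
  exact hne (h2 ▸ rfl : g x = f x).symm

theorem fiber_corep
    (hF : ∀ (J : Type u) [SmallCategory J] [IsConnected J],
      Nonempty (PreservesLimitsOfShape J F)) (i : F.obj PUnit) :
    ∃ B : Type u, ∃ e : ∀ X : Type u, ((fiberFunctor F i).obj X ≃ (B → X)),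
      ∀ (X Y : Type u) (f : X ⟶ Y) (y : (fiberFunctor F i).obj X),
        e Y ((fiberFunctor F i).map f y) = f ∘ (e X y) := by
  haveI : PreservesLimits (fiberFunctor F i) := fiber_preserves F hF i
  haveI h2 := isRightAdjoint_of_preservesLimits_of_isCoseparating
    type_isCoseparating (fiberFunctor F i)
  obtain ⟨L, ⟨adj⟩⟩ := h2.exists_leftAdjoint
  refine ⟨L.obj PUnit, fun X =>
    { toFun := fun y => TypeCat.homEquiv ((adj.homEquiv PUnit X).symm (TypeCat.ofHom fun _ => y))
      invFun := fun g => adj.homEquiv PUnit X (TypeCat.homEquiv.symm g) PUnit.unit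
      left_inv := fun y => by
        show adj.homEquiv PUnit X (TypeCat.homEquiv.symm (TypeCat.homEquiv _)) PUnit.unit = y
        rw [Equiv.symm_apply_apply, Equiv.apply_symm_apply]; rfl
      right_inv := fun g => by
        have h : (TypeCat.ofHom fun _ : PUnit =>
            adj.homEquiv PUnit X (TypeCat.homEquiv.symm g) PUnit.unit) =
            adj.homEquiv PUnit X (TypeCat.homEquiv.symm g) := by
          refine ConcreteCategory.hom_ext _ _ fun u => ?_; cases u; rfl
        show TypeCat.homEquiv ((adj.homEquiv PUnit X).symm (TypeCat.ofHom fun _ =>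
          adj.homEquiv PUnit X (TypeCat.homEquiv.symm g) PUnit.unit)) = g
        rw [h, Equiv.symm_apply_apply, Equiv.apply_symm_apply] }, ?_⟩
  intro X Y f y
  show TypeCat.homEquiv ((adj.homEquiv PUnit Y).symm
    (TypeCat.ofHom fun _ => (fiberFunctor F i).map f y)) = _
  have h : (TypeCat.ofHom fun _ : PUnit => (fiberFunctor F i).map f y) =
      ((TypeCat.ofHom fun _ => y) ≫ (fiberFunctor F i).map f :
        PUnit ⟶ (fiberFunctor F i).obj Y) :=
    rfl
  rw [h, Adjunction.homEquiv_naturality_right_symm]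
  rfl

end Forward

/-- a functor `Set → Set` preserves connected limits iff it is
(isomorphic to) a polynomial functor, i.e. a coproduct of representables. -/
theorem preservesConnectedLimits_iff_polynomial (F : Type u ⥤ Type u) :
    (∀ (J : Type u) [SmallCategory J] [IsConnected J],
        Nonempty (PreservesLimitsOfShape J F)) ↔
      ∃ P : PFunctor.{u}, Nonempty (F ≅ P.toFunctor) := by
  constructor
  · intro hF
    obtain ⟨B, hB⟩ := Classical.axiomOfChoice (fun i => fiber_corep F hF i)
    obtain ⟨e, he⟩ := Classical.axiomOfChoice hB
    refine ⟨⟨F.obj PUnit, B⟩, ⟨?_⟩⟩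
    have reindex : ∀ (Y : Type u) (i : F.obj PUnit) (y' : F.obj Y)
        (h : F.map (TypeCat.ofHom fun _ => PUnit.unit) y' = i),
        (⟨i, e i Y ⟨y', h⟩⟩ : Σ i, B i → Y) =
          ⟨F.map (TypeCat.ofHom fun _ => PUnit.unit) y', e _ Y ⟨y', rfl⟩⟩ := by
      intro Y i y' h; subst h; rfl
    refine NatIso.ofComponents (fun X => Equiv.toIso
      { toFun := fun y => ⟨F.map (TypeCat.ofHom fun _ => PUnit.unit) y, e _ X ⟨y, rfl⟩⟩
        invFun := fun p => ((e p.1 X).symm p.2).1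
        left_inv := fun y => by
          show ((e _ X).symm ((e _ X) ⟨y, rfl⟩)).1 = y
          exact congrArg Subtype.val ((e _ X).symm_apply_apply ⟨y, rfl⟩)
        right_inv := fun p => by
          obtain ⟨i, g⟩ := p
          show (⟨F.map (TypeCat.ofHom fun _ => PUnit.unit) ((e i X).symm g).1,
            e _ X ⟨((e i X).symm g).1, rfl⟩⟩ : Σ i, B i → X) = ⟨i, g⟩
          rw [← reindex X i ((e i X).symm g).1 ((e i X).symm g).2]
          congr 1
          have : (⟨((e i X).symm g).1, ((e i X).symm g).2⟩ :
              {y : F.obj X // F.map (TypeCat.ofHom fun _ => PUnit.unit) y = i}) = (e i X).symm g :=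
            rfl
          rw [this, Equiv.apply_symm_apply] }) ?_
    · intro X Y f
      refine ConcreteCategory.hom_ext _ _ fun y => ?_
      show (⟨F.map (TypeCat.ofHom fun _ => PUnit.unit) (F.map f y),
          e _ Y ⟨F.map f y, rfl⟩⟩ : Σ i, B i → Y) =
        (PFunctor.toFunctor ⟨F.obj PUnit, B⟩).map f
          ⟨F.map (TypeCat.ofHom fun _ => PUnit.unit) y, e _ X ⟨y, rfl⟩⟩
      have hmap : (PFunctor.toFunctor ⟨F.obj PUnit, B⟩).map f
          ⟨F.map (TypeCat.ofHom fun _ => PUnit.unit) y, e _ X ⟨y, rfl⟩⟩ =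
          ⟨F.map (TypeCat.ofHom fun _ => PUnit.unit) y, f ∘ e _ X ⟨y, rfl⟩⟩ := rfl
      rw [hmap, ← he _ X Y f ⟨y, rfl⟩]
      have hfib : (fiberFunctor F (F.map (TypeCat.ofHom fun _ => PUnit.unit) y)).map f ⟨y, rfl⟩ =
          ⟨F.map f y, (F.map_comp_apply f (TypeCat.ofHom fun _ => PUnit.unit) y).symm⟩ := rfl
      rw [hfib]
      exact (reindex Y _ (F.map f y)
        ((F.map_comp_apply f (TypeCat.ofHom fun _ => PUnit.unit) y).symm)).symm
  · rintro ⟨P, ⟨iso⟩⟩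
    intro J _ _
    haveI := pfunctor_preserves P J
    exact ⟨preservesLimitsOfShape_of_natIso iso.symm⟩
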